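/- Let 3 ≤ a ≤ b be integers, n = 3b(b−a+2), and let G be obtained from the n-cycle C_n: v_1,...,v_n plus two vertices v, w each adjacent to all cycle vertices, by attaching a path u_1,...,u_{a−1} with u_{a−1} identified with v. Then rc(G) = a. -/

import Mathlib

namespace RC

variable {V : Type*}

/-- A walk is rainbow under edge coloring `c` if its edges receive pairwise distinct colors. -/
def IsRainbow {G : SimpleGraph V} (c : Sym2 V → ℕ) {u v : V} (p : G.Walk u v) : Prop :=
  (p.edges.map c).Nodup

/-- `c` is a rainbow coloring: every pair of vertices is joined by a rainbow path. -/
def IsRainbowColoring (G : SimpleGraph V) (c : Sym2 V → ℕ) : Prop :=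
  ∀ u v : V, ∃ p : G.Walk u v, p.IsPath ∧ IsRainbow c p

/-- `c` is a strong rainbow coloring: every pair of vertices is joined by a rainbow geodesic. -/
def IsStrongRainbowColoring (G : SimpleGraph V) (c : Sym2 V → ℕ) : Prop :=
  ∀ u v : V, ∃ p : G.Walk u v, p.IsPath ∧ p.length = G.dist u v ∧ IsRainbow c p

/-- `c` uses at most `k` colors (namely `0, …, k-1`) on the edges of `G`. -/
def UsesColors (G : SimpleGraph V) (c : Sym2 V → ℕ) (k : ℕ) : Prop :=
  ∀ e ∈ G.edgeSet, c e < k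

/-- The rainbow connection number `rc(G)`. -/
noncomputable def rc (G : SimpleGraph V) : ℕ :=
  sInf {k | ∃ c : Sym2 V → ℕ, UsesColors G c k ∧ IsRainbowColoring G c}

/-- The strong rainbow connection number `src(G)`. -/
noncomputable def src (G : SimpleGraph V) : ℕ :=
  sInf {k | ∃ c : Sym2 V → ℕ, UsesColors G c k ∧ IsStrongRainbowColoring G c}

/-- Vertices of the construction: cycle vertices `Fin n`, pendant-path vertices
`u_1, …, u_{a-2}` (as `Fin (a-2)`, with `u_{j+1}` coded by `j`), and the two hubs
`v` (coded `true`, playing the role of `u_{a-1}`) and `w` (coded `false`). -/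
abbrev ConV (a n : ℕ) := Fin n ⊕ (Fin (a - 2) ⊕ Bool)

/-- the cycle vertex `v_{i+1}` -/
abbrev cyc {a n : ℕ} (i : Fin n) : ConV a n := Sum.inl i
/-- the path vertex `u_{j+1}` -/
abbrev pth {a n : ℕ} (j : Fin (a - 2)) : ConV a n := Sum.inr (Sum.inl j)
/-- the hub `v` (identified with `u_{a-1}`) -/
abbrev hubv (a n : ℕ) : ConV a n := Sum.inr (Sum.inr true)
/-- the hub `w` -/
abbrev hubw (a n : ℕ) : ConV a n := Sum.inr (Sum.inr false)

def conRel (a n : ℕ) : ConV a n → ConV a n → Prop := fun x y =>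
  match x, y with
  | Sum.inl i, Sum.inl j => (i.val + 1) % n = j.val
  | Sum.inl _, Sum.inr (Sum.inr _) => True
  | Sum.inr (Sum.inl j), Sum.inr (Sum.inl j') => j.val + 1 = j'.val
  | Sum.inr (Sum.inl j), Sum.inr (Sum.inr b) => b = true ∧ j.val + 1 = a - 2
  | _, _ => False

/-- The construction graph `G`: an `n`-cycle `v_1 … v_n`, hubs `v, w` adjacent to all
cycle vertices (but not to each other), and a pendant path `u_1, …, u_{a-1}` with
`u_{a-1} = v`. -/
def ConG (a n : ℕ) : SimpleGraph (ConV a n) := SimpleGraph.fromRel (conRel a n)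

/-! ## auxiliary -/


open SimpleGraph

def colf (a n : ℕ) : ConV a n → ConV a n → ℕ := fun x y =>
  match x, y with
  | Sum.inl _, Sum.inl _ => 2
  | Sum.inl i, Sum.inr (Sum.inr true) => i.val % 2
  | Sum.inr (Sum.inr true), Sum.inl i => i.val % 2
  | Sum.inl i, Sum.inr (Sum.inr false) => (i.val + 1) % 2
  | Sum.inr (Sum.inr false), Sum.inl i => (i.val + 1) % 2
  | Sum.inr (Sum.inl j), Sum.inr (Sum.inl j') => min j.val j'.val + 2
  | Sum.inr (Sum.inl _), Sum.inr (Sum.inr true) => a - 1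
  | Sum.inr (Sum.inr true), Sum.inr (Sum.inl _) => a - 1
  | _, _ => 0

lemma colf_symm (a n : ℕ) : ∀ x y, colf a n x y = colf a n y x := by
  rintro (i | j | (_ | _)) (i' | j' | (_ | _)) <;> simp [colf, Nat.min_comm]

def ccol (a n : ℕ) : Sym2 (ConV a n) → ℕ := Sym2.lift ⟨colf a n, colf_symm a n⟩

@[simp] lemma ccol_mk (a n : ℕ) (x y : ConV a n) : ccol a n s(x, y) = colf a n x y := rfl

lemma adj_cyc_v {a n : ℕ} (i : Fin n) : (ConG a n).Adj (cyc i) (hubv a n) := by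
  rw [ConG, SimpleGraph.fromRel_adj]
  exact ⟨by simp, Or.inl trivial⟩

lemma adj_cyc_w {a n : ℕ} (i : Fin n) : (ConG a n).Adj (cyc i) (hubw a n) := by
  rw [ConG, SimpleGraph.fromRel_adj]
  exact ⟨by simp, Or.inl trivial⟩

lemma adj_cyc_cyc {a n : ℕ} (i j : Fin n) (h : (i.val + 1) % n = j.val) (hne : i ≠ j) :
    (ConG a n).Adj (cyc i) (cyc j) := by
  rw [ConG, SimpleGraph.fromRel_adj]
  exact ⟨by simpa using hne, Or.inl h⟩

lemma adj_pth_pth {a n : ℕ} (j j' : Fin (a - 2)) (h : j.val + 1 = j'.val) :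
    (ConG a n).Adj (pth (a := a) (n := n) j) (pth j') := by
  rw [ConG, SimpleGraph.fromRel_adj]
  exact ⟨by simp [Fin.ext_iff]; omega, Or.inl h⟩

lemma adj_pth_v {a n : ℕ} (j : Fin (a - 2)) (h : j.val + 1 = a - 2) :
    (ConG a n).Adj (pth (a := a) (n := n) j) (hubv a n) := by
  rw [ConG, SimpleGraph.fromRel_adj]
  exact ⟨by simp, Or.inl ⟨rfl, h⟩⟩

/-- Pendant walk from `pth j` up to the hub `v`. -/
lemma pendant_up {a n : ℕ} (ha : 3 ≤ a) : ∀ (d : ℕ) (j : Fin (a - 2)), j.val + d + 3 = a →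
    ∃ p : (ConG a n).Walk (pth j) (hubv a n), p.IsPath ∧
      (∀ z ∈ p.support, z = hubv a n ∨ ∃ t : Fin (a - 2), z = pth t ∧ j.val ≤ t.val) ∧
      (p.edges.map (ccol a n)).Nodup ∧
      (∀ m ∈ p.edges.map (ccol a n), j.val + 2 ≤ m ∧ m < a) := by
  intro d
  induction d with
  | zero =>
    intro j hj
    refine ⟨Walk.cons (adj_pth_v j (by omega)) Walk.nil, ?_, ?_, ?_, ?_⟩
    · simp [Walk.cons_isPath_iff]
    · intro z hz
      simp [Walk.support_cons] at hz
      rcases hz with h | h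
      · exact Or.inr ⟨j, h, le_refl _⟩
      · exact Or.inl h
    · simp
    · intro m hm
      simp [colf] at hm
      omega
  | succ d ih =>
    intro j hj
    have hlt : j.val + 1 < a - 2 := by omega
    obtain ⟨p, hp, hsupp, hnd, hbd⟩ := ih ⟨j.val + 1, hlt⟩ (by simp; omega)
    refine ⟨Walk.cons (adj_pth_pth j ⟨j.val + 1, hlt⟩ rfl) p, ?_, ?_, ?_, ?_⟩
    · rw [Walk.cons_isPath_iff]
      refine ⟨hp, fun hmem => ?_⟩
      rcases hsupp _ hmem with h | ⟨t, ht, hle⟩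
      · simp at h
      · simp only [Sum.inr.injEq, Sum.inl.injEq, Fin.ext_iff] at ht
        simp only [Fin.val_mk] at hle
        omega
    · intro z hz
      rw [Walk.support_cons] at hz
      rcases List.mem_cons.mp hz with h | h
      · exact Or.inr ⟨j, h, le_refl _⟩
      · rcases hsupp _ h with h' | ⟨t, ht, hle⟩
        · exact Or.inl h'
        · simp only [Fin.val_mk] at hle
          exact Or.inr ⟨t, ht, by omega⟩
    · rw [Walk.edges_cons, List.map_cons, List.nodup_cons]
      refine ⟨fun hmem => ?_, hnd⟩
      have h2 := (hbd _ hmem).1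
      simp only [Fin.val_mk] at h2
      have h3 : ccol a n s((pth j : ConV a n), pth ⟨j.val + 1, hlt⟩) = j.val + 2 := by
        simp [colf]
      omega
    · intro m hm
      rw [Walk.edges_cons, List.map_cons] at hm
      rcases List.mem_cons.mp hm with h | h
      · simp [colf] at h
        omega
      · have := hbd _ h
        simp at this ⊢
        omega

/-- Pendant walk between two pendant vertices. -/
lemma pendant_between {a n : ℕ} : ∀ (d : ℕ) (j j' : Fin (a - 2)), j.val + d = j'.val →
    ∃ p : (ConG a n).Walk (pth j) (pth j'), p.IsPath ∧
      (∀ z ∈ p.support, ∃ t : Fin (a - 2), z = pth t ∧ j.val ≤ t.val) ∧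
      (p.edges.map (ccol a n)).Nodup ∧
      (∀ m ∈ p.edges.map (ccol a n), j.val + 2 ≤ m) := by
  intro d
  induction d with
  | zero =>
    intro j j' h
    have : j = j' := Fin.ext (by omega)
    subst this
    exact ⟨Walk.nil, Walk.IsPath.nil, by simp, by simp, by simp⟩
  | succ d ih =>
    intro j j' hj
    have hlt : j.val + 1 < a - 2 := by omega
    obtain ⟨p, hp, hsupp, hnd, hbd⟩ := ih ⟨j.val + 1, hlt⟩ j' (by simp; omega)
    refine ⟨Walk.cons (adj_pth_pth j ⟨j.val + 1, hlt⟩ rfl) p, ?_, ?_, ?_, ?_⟩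
    · rw [Walk.cons_isPath_iff]
      refine ⟨hp, fun hmem => ?_⟩
      obtain ⟨t, ht, hle⟩ := hsupp _ hmem
      simp only [Sum.inr.injEq, Sum.inl.injEq, Fin.ext_iff] at ht
      simp only [Fin.val_mk] at hle
      omega
    · intro z hz
      rw [Walk.support_cons] at hz
      rcases List.mem_cons.mp hz with h | h
      · exact ⟨j, h, le_refl _⟩
      · obtain ⟨t, ht, hle⟩ := hsupp _ h
        simp only [Fin.val_mk] at hle
        exact ⟨t, ht, by omega⟩
    · rw [Walk.edges_cons, List.map_cons, List.nodup_cons]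
      refine ⟨fun hmem => ?_, hnd⟩
      have h2 := hbd _ hmem
      simp only [Fin.val_mk] at h2
      have h3 : ccol a n s((pth j : ConV a n), pth ⟨j.val + 1, hlt⟩) = j.val + 2 := by
        simp [colf]
      omega
    · intro m hm
      rw [Walk.edges_cons, List.map_cons] at hm
      rcases List.mem_cons.mp hm with h | h
      · have h3 : ccol a n s((pth j : ConV a n), pth ⟨j.val + 1, hlt⟩) = j.val + 2 := by
          simp [colf]
        omega
      · have := hbd _ h
        simp only [Fin.val_mk] at this
        omega


lemma rainbow_flip {G : SimpleGraph V} (c : Sym2 V → ℕ) {u v : V}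
    (h : ∃ p : G.Walk u v, p.IsPath ∧ IsRainbow c p) :
    ∃ p : G.Walk v u, p.IsPath ∧ IsRainbow c p := by
  obtain ⟨p, hp, hr⟩ := h
  exact ⟨p.reverse, hp.reverse, by
    unfold IsRainbow at *
    rw [Walk.edges_reverse, List.map_reverse, List.nodup_reverse]
    exact hr⟩

lemma walk_cc {a n : ℕ} (ha : 3 ≤ a) (hn : 2 ≤ n) (i j : Fin n) :
    ∃ p : (ConG a n).Walk (cyc i) (cyc j), p.IsPath ∧ IsRainbow (ccol a n) p := by
  by_cases hij : i = j
  · subst hij; exact ⟨Walk.nil, Walk.IsPath.nil, by simp [IsRainbow]⟩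
  have hijv : i.val ≠ j.val := fun h => hij (Fin.ext h)
  by_cases hpar : i.val % 2 = j.val % 2
  · by_cases hj : j.val + 1 < n
    · -- use k = j+1
      set k : Fin n := ⟨j.val + 1, hj⟩ with hk
      have hkj : (ConG a n).Adj (cyc k) (cyc j) :=
        (adj_cyc_cyc j k (by simp [hk, Nat.mod_eq_of_lt hj]) (by simp [Fin.ext_iff, hk])).symm
      refine ⟨Walk.cons (adj_cyc_v i) (Walk.cons (adj_cyc_v k).symm
        (Walk.cons hkj Walk.nil)), ?_, ?_⟩
      · simp [Walk.cons_isPath_iff, Fin.ext_iff, hk]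
        omega
      · unfold IsRainbow
        simp [colf, hk]
        omega
    · -- j = n-1, use k = n-2
      have hjv : j.val = n - 1 := by have := j.isLt; omega
      set k : Fin n := ⟨n - 2, by omega⟩ with hk
      have hkj : (ConG a n).Adj (cyc k) (cyc j) := by
        refine adj_cyc_cyc k j ?_ (by simp [Fin.ext_iff, hk]; omega)
        simp [hk, hjv]
        rw [Nat.mod_eq_of_lt (by omega)]
        omega
      refine ⟨Walk.cons (adj_cyc_v i) (Walk.cons (adj_cyc_v k).symm
        (Walk.cons hkj Walk.nil)), ?_, ?_⟩
      · simp [Walk.cons_isPath_iff, Fin.ext_iff, hk]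
        omega
      · unfold IsRainbow
        simp [colf, hk, hjv]
        omega
  · refine ⟨Walk.cons (adj_cyc_v i) (Walk.cons (adj_cyc_v j).symm Walk.nil), ?_, ?_⟩
    · simp [Walk.cons_isPath_iff, Fin.ext_iff]
      omega
    · unfold IsRainbow
      simp [colf]
      omega

lemma walk_cv {a n : ℕ} (i : Fin n) :
    ∃ p : (ConG a n).Walk (cyc i) (hubv a n), p.IsPath ∧ IsRainbow (ccol a n) p :=
  ⟨Walk.cons (adj_cyc_v i) Walk.nil, by simp [Walk.cons_isPath_iff], by simp [IsRainbow]⟩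

lemma walk_cw {a n : ℕ} (i : Fin n) :
    ∃ p : (ConG a n).Walk (cyc i) (hubw a n), p.IsPath ∧ IsRainbow (ccol a n) p :=
  ⟨Walk.cons (adj_cyc_w i) Walk.nil, by simp [Walk.cons_isPath_iff], by simp [IsRainbow]⟩

lemma walk_vw {a n : ℕ} (hn : 2 ≤ n) :
    ∃ p : (ConG a n).Walk (hubv a n) (hubw a n), p.IsPath ∧ IsRainbow (ccol a n) p := by
  refine ⟨Walk.cons (adj_cyc_v ⟨0, by omega⟩).symm
    (Walk.cons (adj_cyc_w ⟨0, by omega⟩) Walk.nil), ?_, ?_⟩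
  · simp [Walk.cons_isPath_iff]
  · unfold IsRainbow
    simp [colf]

lemma pendant_up' {a n : ℕ} (ha : 3 ≤ a) (j : Fin (a - 2)) :
    ∃ p : (ConG a n).Walk (pth j) (hubv a n), p.IsPath ∧
      (∀ z ∈ p.support, z = hubv a n ∨ ∃ t : Fin (a - 2), z = pth t ∧ j.val ≤ t.val) ∧
      (p.edges.map (ccol a n)).Nodup ∧
      (∀ m ∈ p.edges.map (ccol a n), j.val + 2 ≤ m ∧ m < a) := by
  have hj := j.isLt
  exact pendant_up ha (a - 3 - j.val) j (by omega)

lemma walk_cp {a n : ℕ} (ha : 3 ≤ a) (i : Fin n) (j : Fin (a - 2)) :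
    ∃ p : (ConG a n).Walk (cyc i) (pth j), p.IsPath ∧ IsRainbow (ccol a n) p := by
  obtain ⟨p, hp, hsupp, hnd, hbd⟩ := pendant_up' (n := n) ha j
  refine ⟨Walk.cons (adj_cyc_v i) p.reverse, ?_, ?_⟩
  · rw [Walk.cons_isPath_iff]
    refine ⟨hp.reverse, fun hmem => ?_⟩
    rw [Walk.support_reverse, List.mem_reverse] at hmem
    rcases hsupp _ hmem with h | ⟨t, ht, _⟩ <;> simp_all
  · unfold IsRainbow
    rw [Walk.edges_cons, List.map_cons, List.nodup_cons, Walk.edges_reverse,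
      List.map_reverse, List.nodup_reverse]
    refine ⟨fun hmem => ?_, hnd⟩
    rw [List.mem_reverse] at hmem
    have := (hbd _ hmem).1
    have h3 : ccol a n s((cyc i : ConV a n), hubv a n) = i.val % 2 := by simp [colf]
    omega

lemma walk_wp {a n : ℕ} (ha : 3 ≤ a) (hn : 2 ≤ n) (j : Fin (a - 2)) :
    ∃ p : (ConG a n).Walk (hubw a n) (pth j), p.IsPath ∧ IsRainbow (ccol a n) p := by
  obtain ⟨p, hp, hsupp, hnd, hbd⟩ := pendant_up' (n := n) ha j
  set z0 : Fin n := ⟨0, by omega⟩ with hz0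
  refine ⟨Walk.cons (adj_cyc_w z0).symm (Walk.cons (adj_cyc_v z0) p.reverse), ?_, ?_⟩
  · rw [Walk.cons_isPath_iff, Walk.cons_isPath_iff]
    refine ⟨⟨hp.reverse, fun hmem => ?_⟩, fun hmem => ?_⟩
    · rw [Walk.support_reverse, List.mem_reverse] at hmem
      rcases hsupp _ hmem with h | ⟨t, ht, _⟩ <;> simp_all
    · rw [Walk.support_cons] at hmem
      rcases List.mem_cons.mp hmem with h | h
      · simp at h
      · rw [Walk.support_reverse, List.mem_reverse] at h
        rcases hsupp _ h with h' | ⟨t, ht, _⟩ <;> simp_all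
  · unfold IsRainbow
    rw [Walk.edges_cons, Walk.edges_cons, List.map_cons, List.map_cons,
      List.nodup_cons, List.nodup_cons, Walk.edges_reverse,
      List.map_reverse, List.nodup_reverse]
    have h1 : ccol a n s((hubw a n : ConV a n), cyc z0) = 1 := by simp [colf, hz0]
    have h2 : ccol a n s((cyc z0 : ConV a n), hubv a n) = 0 := by simp [colf, hz0]
    refine ⟨?_, ?_, hnd⟩
    · rw [h1]
      simp only [List.mem_cons, List.mem_reverse, h2]
      rintro (h | h)
      · omega
      · have := (hbd _ h).1
        omega
    · rw [h2]
      intro h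
      rw [List.mem_reverse] at h
      have := (hbd _ h).1
      omega

lemma walk_pp {a n : ℕ} (ha : 3 ≤ a) (j j' : Fin (a - 2)) (h : j.val ≤ j'.val) :
    ∃ p : (ConG a n).Walk (pth j) (pth j'), p.IsPath ∧ IsRainbow (ccol a n) p := by
  obtain ⟨p, hp, _, hnd, _⟩ := pendant_between (j'.val - j.val) j j' (by omega)
  exact ⟨p, hp, hnd⟩

lemma main_coloring {a n : ℕ} (ha : 3 ≤ a) (hn : 2 ≤ n) :
    IsRainbowColoring (ConG a n) (ccol a n) := by
  intro x y
  rcases x with i | j | (_ | _) <;> rcases y with i' | j' | (_ | _)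
  · exact walk_cc ha hn i i'
  · exact walk_cp ha i j'
  · exact walk_cw i
  · exact walk_cv i
  · exact rainbow_flip _ (walk_cp ha i' j)
  · rcases le_or_gt j.val j'.val with h | h
    · exact walk_pp ha j j' h
    · exact rainbow_flip _ (walk_pp ha j' j (le_of_lt h))
  · exact rainbow_flip _ (walk_wp ha hn j)
  · obtain ⟨p, hp, _, hnd, _⟩ := pendant_up' (n := n) ha j
    exact ⟨p, hp, hnd⟩
  · exact rainbow_flip _ (walk_cw i')
  · exact walk_wp ha hn j'
  · exact ⟨Walk.nil, Walk.IsPath.nil, by simp [IsRainbow]⟩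
  · exact rainbow_flip _ (walk_vw hn)
  · exact rainbow_flip _ (walk_cv i')
  · obtain ⟨p, hp, _, hnd, _⟩ := pendant_up' (n := n) ha j'
    exact rainbow_flip _ ⟨p, hp, hnd⟩
  · exact walk_vw hn
  · exact ⟨Walk.nil, Walk.IsPath.nil, by simp [IsRainbow]⟩

lemma main_uses {a n : ℕ} (ha : 3 ≤ a) : UsesColors (ConG a n) (ccol a n) a := by
  intro e he
  induction e using Sym2.ind with
  | _ x y =>
    rw [ccol_mk]
    rcases x with i | j | (_ | _) <;> rcases y with i' | j' | (_ | _) <;>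
      simp [colf] <;> first
        | omega
        | (have := j.isLt; omega)
        | (have := Nat.min_le_left j.val j'.val; have := j.isLt; omega)

/-! ## lower bound -/

def phi (a n : ℕ) : ConV a n → ℕ
  | Sum.inl _ => a - 1
  | Sum.inr (Sum.inl j) => j.val
  | Sum.inr (Sum.inr true) => a - 2
  | Sum.inr (Sum.inr false) => a

lemma phi_adj {a n : ℕ} (ha : 3 ≤ a) {x y : ConV a n} (h : (ConG a n).Adj x y) :
    phi a n x ≤ phi a n y + 1 ∧ phi a n y ≤ phi a n x + 1 := by
  rw [ConG, SimpleGraph.fromRel_adj] at h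
  obtain ⟨-, h⟩ := h
  rcases x with i | j | (_ | _) <;> rcases y with i' | j' | (_ | _) <;>
    simp only [conRel, phi] at h ⊢ <;> (try simp at h) <;> omega

lemma phi_walk {a n : ℕ} (ha : 3 ≤ a) {x y : ConV a n} (p : (ConG a n).Walk x y) :
    phi a n y ≤ phi a n x + p.length := by
  induction p with
  | nil => simp
  | cons h q ih =>
    have := (phi_adj ha h).2
    rw [Walk.length_cons]
    omega

lemma lower_bound {a n : ℕ} (ha : 3 ≤ a) (k : ℕ)
    (hk : ∃ c : Sym2 (ConV a n) → ℕ, UsesColors (ConG a n) c k ∧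
      IsRainbowColoring (ConG a n) c) : a ≤ k := by
  obtain ⟨c, huse, hrb⟩ := hk
  obtain ⟨p, hp, hr⟩ := hrb (pth ⟨0, by omega⟩) (hubw a n)
  have hlen : a ≤ p.length := by
    have := phi_walk ha p
    simp [phi] at this
    omega
  have hcard : (p.edges.map c).length ≤ k := by
    have hsub : (p.edges.map c).toFinset ⊆ Finset.range k := by
      intro m hm
      rw [List.mem_toFinset] at hm
      rw [Finset.mem_range]
      obtain ⟨e, he, rfl⟩ := List.mem_map.mp hm
      exact huse e (p.edges_subset_edgeSet he)
    calc (p.edges.map c).length = (p.edges.map c).toFinset.card :=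
          (List.toFinset_card_of_nodup hr).symm
      _ ≤ (Finset.range k).card := Finset.card_le_card hsub
      _ = k := Finset.card_range k
  rw [List.length_map, Walk.length_edges] at hcard
  omega


/-- For `3 ≤ a ≤ b` and `n = 3b(b-a+2)`, the construction graph has `rc(G) = a`. -/
theorem stmt_7 (a b : ℕ) (ha : 3 ≤ a) (hab : a ≤ b) :
    rc (ConG a (3 * b * (b - a + 2))) = a := by
  set n := 3 * b * (b - a + 2) with hn
  have hn2 : 2 ≤ n := by
    have h1 : 1 ≤ 3 * b := by omega
    have h2 : 2 ≤ b - a + 2 := by omega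
    calc 2 = 1 * 2 := by omega
      _ ≤ 3 * b * (b - a + 2) := Nat.mul_le_mul h1 h2
  have hmem : a ∈ {k | ∃ c : Sym2 (ConV a n) → ℕ, UsesColors (ConG a n) c k ∧
      IsRainbowColoring (ConG a n) c} :=
    ⟨ccol a n, main_uses ha, main_coloring ha hn2⟩
  refine le_antisymm (Nat.sInf_le hmem) ?_
  have := Nat.sInf_mem ⟨a, hmem⟩
  exact lower_bound ha _ this



end RC
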